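/- Let T ⊆ (0,∞) be nonempty and I ⊆ (0,∞) an interval with sup I / inf I > R_T. If φ : I → ℝ satisfies φ(tx) = φ(x) for all t ∈ T and x ∈ I ∩ t⁻¹I, and φ is continuous on some nontrivial subinterval of I, then φ is constant on I. -/
import Mathlib


open Set Filter Topology Pointwise

noncomputable section

/-- `T* = T ∪ T⁻¹ ∪ {1}` -/
def Tstar (T : Set ℝ) : Set ℝ := T ∪ (fun t => t⁻¹) '' T ∪ {1}

/-- `T_{γ₋,γ₊,n}`: products of `n` elements of `T*` whose partial products stay in `[γ₋,γ₊]`. -/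
def TProdN (T : Set ℝ) (γm γp : ℝ) (n : ℕ) : Set ℝ :=
  {x | ∃ t : Fin n → ℝ, (∀ i, t i ∈ Tstar T) ∧ x = ∏ i, t i ∧
    ∀ k : Fin n, (∏ i ∈ Finset.univ.filter (· ≤ k), t i) ∈ Icc γm γp}

/-- `T_{γ₋,γ₊} = ⋃_{n ≥ 1} T_{γ₋,γ₊,n}` -/
def TProd (T : Set ℝ) (γm γp : ℝ) : Set ℝ := ⋃ n ∈ {n : ℕ | 1 ≤ n}, TProdN T γm γp n

/-- `T_{γ₋,γ₊}` is dense in `[γ₋,γ₊]`. -/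
def DenseInIcc (T : Set ℝ) (γm γp : ℝ) : Prop := Icc γm γp ⊆ closure (TProd T γm γp)

/-- The limit ratio `R_T ∈ [1,∞]` (with `inf ∅ = ∞`). -/
def limitRatio (T : Set ℝ) : ENNReal :=
  sInf {r : ENNReal | ∃ γm γp : ℝ, γm ∈ Ioo (0:ℝ) 1 ∧ 1 < γp ∧ DenseInIcc T γm γp ∧
    r = ENNReal.ofReal (γp / γm)}

/-- sup of a set of reals, valued in `[0,∞]`. -/
def eSup (I : Set ℝ) : ENNReal := ⨆ x ∈ I, ENNReal.ofReal x

/-- inf of a set of reals, valued in `[0,∞]` (`= ∞` for `I = ∅`). -/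
def eInf (I : Set ℝ) : ENNReal := ⨅ x ∈ I, ENNReal.ofReal x


/-! ### Auxiliary lemmas -/

lemma tstar_pos {T : Set ℝ} (hT0 : T ⊆ Ioi 0) {t : ℝ} (ht : t ∈ Tstar T) : 0 < t := by
  rcases ht with (ht | ⟨u, hu, rfl⟩) | ht
  · exact hT0 ht
  · exact inv_pos.mpr (hT0 hu)
  · simp only [mem_singleton_iff] at ht; rw [ht]; norm_num

lemma aux_step {T : Set ℝ} (hT0 : T ⊆ Ioi 0) {I : Set ℝ} {φ : ℝ → ℝ}
    (hφeq : ∀ t ∈ T, ∀ x ∈ I, t * x ∈ I → φ (t * x) = φ x) :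
    ∀ t ∈ Tstar T, ∀ y ∈ I, t * y ∈ I → φ (t * y) = φ y := by
  rintro t ht y hy hty
  rcases ht with (ht | ⟨u, hu, rfl⟩) | ht
  · exact hφeq t ht y hy hty
  · have hu0 : (u:ℝ) ≠ 0 := ne_of_gt (hT0 hu)
    have h2 : u * (u⁻¹ * y) = y := by field_simp
    have := hφeq u hu (u⁻¹ * y) hty (by rw [h2]; exact hy)
    rw [h2] at this
    exact this.symm
  · simp only [mem_singleton_iff] at ht; rw [ht, one_mul]

lemma filter_prod_castSucc {n : ℕ} (k : Fin n) (t : Fin (n+1) → ℝ) :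
    ∏ i ∈ Finset.univ.filter (· ≤ Fin.castSucc k), t i
      = ∏ i ∈ Finset.univ.filter (· ≤ k), t (Fin.castSucc i) := by
  have hset : Finset.univ.filter (· ≤ Fin.castSucc k)
      = (Finset.univ.filter (· ≤ k)).image Fin.castSucc := by
    ext i
    simp only [Finset.mem_image, Finset.mem_filter, Finset.mem_univ, true_and]
    constructor
    · intro hi
      have hi' : i.val ≤ k.val := by
        rw [Fin.le_def] at hi; simpa using hi
      have hlt : i.val < n := lt_of_le_of_lt hi' k.isLt
      refine ⟨⟨i.val, hlt⟩, ?_, ?_⟩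
      · rw [Fin.le_def]; exact hi'
      · ext; simp
    · rintro ⟨j, hj, rfl⟩
      rw [Fin.le_def] at hj ⊢
      simpa using hj
  rw [hset]
  exact Finset.prod_image (by intro a _ b _ h; exact Fin.castSucc_injective n h)

lemma prod_fin_mem_Icc {γm γp : ℝ} (hγm1 : γm ≤ 1) (hγp : 1 ≤ γp)
    {n : ℕ} (t : Fin n → ℝ)
    (hQ : ∀ k : Fin n, (∏ i ∈ Finset.univ.filter (· ≤ k), t i) ∈ Icc γm γp) :
    (∏ i, t i) ∈ Icc γm γp := by
  cases n with
  | zero => simpa using ⟨hγm1, hγp⟩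
  | succ m =>
    have h := hQ (Fin.last m)
    have : Finset.univ.filter (· ≤ Fin.last m) = Finset.univ :=
      Finset.filter_true_of_mem (fun i _ => Fin.le_last i)
    rwa [this] at h

lemma aux_prod {T I : Set ℝ} (hT0 : T ⊆ Ioi 0) {φ : ℝ → ℝ} {γm γp : ℝ}
    (hγm0 : 0 < γm) (hγm1 : γm ≤ 1) (hγp : 1 ≤ γp)
    (hstep : ∀ t ∈ Tstar T, ∀ y ∈ I, t * y ∈ I → φ (t * y) = φ y)
    {c : ℝ} (hc0 : 0 < c) (hcI : Icc (γm * c) (γp * c) ⊆ I) :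
    ∀ n (t : Fin n → ℝ), (∀ i, t i ∈ Tstar T) →
      (∀ k : Fin n, (∏ i ∈ Finset.univ.filter (· ≤ k), t i) ∈ Icc γm γp) →
      φ ((∏ i, t i) * c) = φ c := by
  intro n
  induction n with
  | zero => intro t _ _; simp
  | succ n ih =>
    intro t ht hQ
    set t' : Fin n → ℝ := fun i => t (Fin.castSucc i) with ht'def
    have ht' : ∀ i, t' i ∈ Tstar T := fun i => ht _
    have hQ' : ∀ k : Fin n, (∏ i ∈ Finset.univ.filter (· ≤ k), t' i) ∈ Icc γm γp := by
      intro k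
      rw [← filter_prod_castSucc k t]
      exact hQ (Fin.castSucc k)
    have hP' : (∏ i, t' i) ∈ Icc γm γp := prod_fin_mem_Icc hγm1 hγp t' hQ'
    have hyI : (∏ i, t' i) * c ∈ I := by
      apply hcI
      constructor
      · exact mul_le_mul_of_nonneg_right hP'.1 hc0.le
      · exact mul_le_mul_of_nonneg_right hP'.2 hc0.le
    have hQlast : (∏ i, t i) ∈ Icc γm γp := prod_fin_mem_Icc hγm1 hγp t hQ
    have hxI : (∏ i, t i) * c ∈ I := by
      apply hcI
      exact ⟨mul_le_mul_of_nonneg_right hQlast.1 hc0.le,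
             mul_le_mul_of_nonneg_right hQlast.2 hc0.le⟩
    have hsplit : (∏ i, t i) * c = t (Fin.last n) * ((∏ i, t' i) * c) := by
      rw [Fin.prod_univ_castSucc]; ring
    rw [hsplit]
    rw [hstep (t (Fin.last n)) (ht _) _ hyI (by rw [← hsplit]; exact hxI)]
    exact ih t' ht' hQ'

lemma aux_prodTP {T I : Set ℝ} (hT0 : T ⊆ Ioi 0) {φ : ℝ → ℝ} {γm γp : ℝ}
    (hγm0 : 0 < γm) (hγm1 : γm ≤ 1) (hγp : 1 ≤ γp)
    (hstep : ∀ t ∈ Tstar T, ∀ y ∈ I, t * y ∈ I → φ (t * y) = φ y)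
    {c : ℝ} (hc0 : 0 < c) (hcI : Icc (γm * c) (γp * c) ⊆ I) :
    ∀ s ∈ TProd T γm γp, φ (s * c) = φ c := by
  intro s hs
  simp only [TProd, mem_iUnion, mem_setOf_eq] at hs
  obtain ⟨n, _, t, ht, rfl, hQ⟩ := hs
  exact aux_prod hT0 hγm0 hγm1 hγp hstep hc0 hcI n t ht hQ

lemma aux_pick {T : Set ℝ} {γm γp : ℝ} (hd : DenseInIcc T γm γp)
    {l r : ℝ} (h : max γm l < min γp r) :
    ∃ s ∈ TProd T γm γp, l < s ∧ s < r := by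
  set z := (max γm l + min γp r) / 2 with hz
  have hz1 : max γm l < z := by rw [hz]; linarith
  have hz2 : z < min γp r := by rw [hz]; linarith
  have hzIcc : z ∈ Icc γm γp :=
    ⟨le_of_lt (lt_of_le_of_lt (le_max_left _ _) hz1),
     le_of_lt (lt_of_lt_of_le hz2 (min_le_left _ _))⟩
  have hzc : z ∈ closure (TProd T γm γp) := hd hzIcc
  have hnb : Ioo l r ∈ 𝓝 z := by
    apply Ioo_mem_nhds
    · exact lt_of_le_of_lt (le_max_right _ _) hz1
    · exact lt_of_lt_of_le hz2 (min_le_right _ _)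
  rcases mem_closure_iff_nhds.mp hzc _ hnb with ⟨s, hs1, hs2⟩
  exact ⟨s, hs2, hs1.1, hs1.2⟩

lemma aux_dense {T I : Set ℝ} (hT0 : T ⊆ Ioi 0) {φ : ℝ → ℝ} {γm γp : ℝ}
    (hγm0 : 0 < γm) (hγm1 : γm < 1) (hγp : 1 < γp) (hd : DenseInIcc T γm γp)
    (hstep : ∀ t ∈ Tstar T, ∀ y ∈ I, t * y ∈ I → φ (t * y) = φ y)
    {b' α β : ℝ} (hαβ : α < β) (hb : ∀ z ∈ Ioo α β, φ z = b')
    {c : ℝ} (hc0 : 0 < c) (hcI : Icc (γm * c) (γp * c) ⊆ I)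
    (h1 : α < γp * c) (h2 : γm * c < β) : φ c = b' := by
  have hp : max γm (α / c) < min γp (β / c) := by
    rcases max_cases γm (α / c) with ⟨he, _⟩ | ⟨he, _⟩ <;>
      rcases min_cases γp (β / c) with ⟨he2, _⟩ | ⟨he2, _⟩ <;> rw [he, he2]
    · linarith
    · rw [lt_div_iff₀ hc0]; linarith [mul_comm β c]
    · rw [div_lt_iff₀ hc0]; linarith [mul_comm α c]
    · rw [div_lt_div_iff₀ hc0 hc0]; nlinarith
  obtain ⟨s, hsT, hsl, hsr⟩ := aux_pick hd hp
  have : φ (s * c) = φ c := aux_prodTP hT0 hγm0 hγm1.le hγp.le hstep hc0 hcI s hsT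
  rw [← this]
  apply hb
  constructor
  · calc α = (α / c) * c := by field_simp
    _ < s * c := by apply mul_lt_mul_of_pos_right hsl hc0
  · calc s * c < (β / c) * c := mul_lt_mul_of_pos_right hsr hc0
    _ = β := by field_simp

lemma aux_tau_fin {T : Set ℝ} (hT0 : T ⊆ Ioi 0) {γm γp : ℝ}
    (hγm0 : 0 < γm) (hγm1 : γm ≤ 1) (hγp : 1 ≤ γp) :
    ∀ n (t : Fin n → ℝ), (∀ i, t i ∈ Tstar T) →
      (∀ k : Fin n, (∏ i ∈ Finset.univ.filter (· ≤ k), t i) ∈ Icc γm γp) →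
      (∏ i, t i) < 1 → ∃ τ ∈ Tstar T, γm / γp ≤ τ ∧ τ < 1 := by
  intro n
  induction n with
  | zero => intro t _ _ h; simp at h
  | succ n ih =>
    intro t ht hQ hlt
    set t' : Fin n → ℝ := fun i => t (Fin.castSucc i) with ht'def
    have ht' : ∀ i, t' i ∈ Tstar T := fun i => ht _
    have hQ' : ∀ k : Fin n, (∏ i ∈ Finset.univ.filter (· ≤ k), t' i) ∈ Icc γm γp := by
      intro k
      rw [← filter_prod_castSucc k t]
      exact hQ (Fin.castSucc k)
    have hP' : (∏ i, t' i) ∈ Icc γm γp := prod_fin_mem_Icc hγm1 hγp t' hQ'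
    have hP'0 : 0 < ∏ i, t' i := lt_of_lt_of_le hγm0 hP'.1
    have hQl : (∏ i, t i) ∈ Icc γm γp := prod_fin_mem_Icc hγm1 hγp t hQ
    have hsplit : (∏ i, t i) = (∏ i, t' i) * t (Fin.last n) := Fin.prod_univ_castSucc t
    by_cases hc : t (Fin.last n) < 1
    · refine ⟨t (Fin.last n), ht _, ?_, hc⟩
      have h1 : γm ≤ (∏ i, t' i) * t (Fin.last n) := by rw [← hsplit]; exact hQl.1
      have h2 : (∏ i, t' i) ≤ γp := hP'.2
      have htl0 : 0 < t (Fin.last n) := tstar_pos hT0 (ht _)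
      rw [div_le_iff₀ (lt_of_lt_of_le hγm0 (le_trans hP'.1 h2))]
      nlinarith
    · push_neg at hc
      apply ih t' ht' hQ'
      have : (∏ i, t' i) * 1 ≤ (∏ i, t' i) * t (Fin.last n) :=
        mul_le_mul_of_nonneg_left hc hP'0.le
      rw [mul_one] at this
      rw [hsplit] at hlt
      linarith

lemma exists_tau {T : Set ℝ} (hT0 : T ⊆ Ioi 0) {γm γp : ℝ}
    (hγm0 : 0 < γm) (hγm1 : γm < 1) (hγp : 1 < γp) (hd : DenseInIcc T γm γp) :
    ∃ τ ∈ Tstar T, γm / γp ≤ τ ∧ τ < 1 := by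
  obtain ⟨s, hsT, _, hs1⟩ := aux_pick hd (l := γm - 1) (r := 1)
    (by rcases max_cases γm (γm - 1) with ⟨he, _⟩ | ⟨he, _⟩ <;>
        rcases min_cases γp (1:ℝ) with ⟨he2, _⟩ | ⟨he2, _⟩ <;> rw [he, he2] <;> linarith)
  simp only [TProd, mem_iUnion, mem_setOf_eq] at hsT
  obtain ⟨n, _, tt, htt, rfl, hQ⟩ := hsT
  exact aux_tau_fin hT0 hγm0 hγm1.le hγp.le n tt htt hQ hs1

lemma ratio_extract {I : Set ℝ} (hI : I ⊆ Ioi 0) {γm γp : ℝ}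
    (hγm0 : 0 < γm) (hγp0 : 0 < γp)
    (hr : ENNReal.ofReal (γp / γm) < eSup I / eInf I) :
    ∃ a ∈ I, ∃ b ∈ I, γp * a < γm * b := by
  by_contra hcon
  push_neg at hcon
  have hle : eSup I / eInf I ≤ ENNReal.ofReal (γp / γm) := by
    rcases eq_empty_or_nonempty I with rfl | ⟨x₁, hx₁⟩
    · simp [eSup, eInf]
    · have hx₁0 : 0 < x₁ := hI hx₁
      have hInflb : ENNReal.ofReal (γm * x₁ / γp) ≤ eInf I := by
        apply le_iInf₂
        intro a ha
        apply ENNReal.ofReal_le_ofReal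
        rw [div_le_iff₀ hγp0]
        have := hcon a ha x₁ hx₁
        linarith [mul_comm a γp]
      have hInf0 : eInf I ≠ 0 := by
        intro h0
        rw [h0] at hInflb
        simp only [nonpos_iff_eq_zero, ENNReal.ofReal_eq_zero] at hInflb
        nlinarith [mul_pos hγm0 hx₁0, div_pos (mul_pos hγm0 hx₁0) hγp0]
      have hInft : eInf I ≠ ⊤ := by
        apply ne_top_of_le_ne_top (b := ENNReal.ofReal x₁)
        · exact ENNReal.ofReal_ne_top
        · exact iInf₂_le x₁ hx₁
      rw [ENNReal.div_le_iff_le_mul (Or.inl hInf0) (Or.inl hInft)]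
      apply iSup₂_le
      intro b hb
      rw [mul_comm, ← ENNReal.div_le_iff_le_mul
        (Or.inl (by simp only [ne_eq, ENNReal.ofReal_eq_zero, not_le]; exact div_pos hγp0 hγm0))
        (Or.inl ENNReal.ofReal_ne_top)]
      apply le_iInf₂
      intro a ha
      rw [← ENNReal.ofReal_div_of_pos (div_pos hγp0 hγm0)]
      apply ENNReal.ofReal_le_ofReal
      rw [div_div_eq_mul_div, div_le_iff₀ hγp0]
      have := hcon a ha b hb
      nlinarith
  exact absurd hr (not_lt.mpr hle)

set_option maxHeartbeats 1600000 in
theorem stmt17 (T : Set ℝ) (hT : T.Nonempty) (hT0 : T ⊆ Ioi 0)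
    (I : Set ℝ) (hI : I ⊆ Ioi 0) (hIint : I.OrdConnected)
    (hratio : limitRatio T < eSup I / eInf I)
    (φ : ℝ → ℝ)
    (hφeq : ∀ t ∈ T, ∀ x ∈ I, t * x ∈ I → φ (t * x) = φ x)
    (U : Set ℝ) (hU : U ⊆ I) (hUint : U.OrdConnected)
    (hUnt : ∃ a ∈ U, ∃ b ∈ U, a ≠ b)
    (hcont : ContinuousOn φ U) :
    ∃ b : ℝ, ∀ x ∈ I, φ x = b := by
  -- extract γm, γp
  rw [limitRatio, sInf_lt_iff] at hratio
  obtain ⟨r, ⟨γm, γp, hγm, hγp, hd, rfl⟩, hrlt⟩ := hratio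
  obtain ⟨hγm0, hγm1⟩ := hγm
  have hγp0 : (0:ℝ) < γp := lt_trans one_pos hγp
  have hstep := aux_step hT0 hφeq
  -- two points with big ratio
  obtain ⟨as, hasI, bs, hbsI, hasbs⟩ := ratio_extract hI hγm0 hγp0 hrlt
  -- two points of U
  obtain ⟨p, hp, q, hq, hne⟩ := hUnt
  obtain ⟨a₀, b₀, ha₀, hb₀, hab⟩ : ∃ a₀ b₀, a₀ ∈ U ∧ b₀ ∈ U ∧ a₀ < b₀ := by
    rcases hne.lt_or_gt with h | h
    exacts [⟨p, q, hp, hq, h⟩, ⟨q, p, hq, hp, h⟩]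
  have ha₀I : a₀ ∈ I := hU ha₀
  have hb₀I : b₀ ∈ I := hU hb₀
  have ha₀0 : 0 < a₀ := hI ha₀I
  have hb₀0 : 0 < b₀ := hI hb₀I
  -- global A B
  set A := min as a₀ with hAdef
  set B := max bs b₀ with hBdef
  have hAI : A ∈ I := by rcases min_cases as a₀ with ⟨h, _⟩ | ⟨h, _⟩ <;> rw [hAdef, h] <;> assumption
  have hBI : B ∈ I := by rcases max_cases bs b₀ with ⟨h, _⟩ | ⟨h, _⟩ <;> rw [hBdef, h] <;> assumption
  have hA0 : 0 < A := hI hAI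
  have hAB : γp * A < γm * B := by
    have h1 : A ≤ as := min_le_left _ _
    have h2 : bs ≤ B := le_max_left _ _
    nlinarith
  have hAa₀ : A ≤ a₀ := min_le_right _ _
  have hb₀B : b₀ ≤ B := le_max_right _ _
  have hIccAB : Icc A B ⊆ I := hIint.out hAI hBI
  -- c₀
  have hLR : max (A / γm) (a₀ / γp) < min (B / γp) (b₀ / γm) := by
    rcases max_cases (A / γm) (a₀ / γp) with ⟨he, _⟩ | ⟨he, _⟩ <;>
      rcases min_cases (B / γp) (b₀ / γm) with ⟨he2, _⟩ | ⟨he2, _⟩ <;> rw [he, he2]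
    · rw [div_lt_div_iff₀ hγm0 hγp0]; nlinarith
    · rw [div_lt_div_iff₀ hγm0 hγm0]; nlinarith
    · rw [div_lt_div_iff₀ hγp0 hγp0]; nlinarith
    · rw [div_lt_div_iff₀ hγp0 hγm0]; nlinarith
  set c₀ := (max (A / γm) (a₀ / γp) + min (B / γp) (b₀ / γm)) / 2 with hc₀def
  have hc₀L : max (A / γm) (a₀ / γp) < c₀ := by rw [hc₀def]; linarith
  have hc₀R : c₀ < min (B / γp) (b₀ / γm) := by rw [hc₀def]; linarith
  have hc₀1 : A < γm * c₀ := by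
    have := lt_of_le_of_lt (le_max_left (A / γm) (a₀ / γp)) hc₀L
    rw [div_lt_iff₀ hγm0] at this; linarith [mul_comm c₀ γm]
  have hc₀3 : a₀ < γp * c₀ := by
    have := lt_of_le_of_lt (le_max_right (A / γm) (a₀ / γp)) hc₀L
    rw [div_lt_iff₀ hγp0] at this; linarith [mul_comm c₀ γp]
  have hc₀2 : γp * c₀ < B := by
    have := lt_of_lt_of_le hc₀R (min_le_left (B / γp) (b₀ / γm))
    rw [lt_div_iff₀ hγp0] at this; linarith [mul_comm c₀ γp]
  have hc₀4 : γm * c₀ < b₀ := by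
    have := lt_of_lt_of_le hc₀R (min_le_right (B / γp) (b₀ / γm))
    rw [lt_div_iff₀ hγm0] at this; linarith [mul_comm c₀ γm]
  have hc₀0 : 0 < c₀ := by nlinarith
  have hcIc₀ : Icc (γm * c₀) (γp * c₀) ⊆ I :=
    subset_trans (Icc_subset_Icc hc₀1.le hc₀2.le) hIccAB
  -- α₀ β₀ and b
  set α₀ := max a₀ (γm * c₀) with hα₀def
  set β₀ := min b₀ (γp * c₀) with hβ₀def
  set b := φ c₀ with hbdef
  have hα₀a₀ : a₀ ≤ α₀ := le_max_left _ _
  have hβ₀b₀ : β₀ ≤ b₀ := min_le_left _ _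
  have hα₀γ : γm * c₀ ≤ α₀ := le_max_right _ _
  have hβ₀γ : β₀ ≤ γp * c₀ := min_le_right _ _
  have hα₀β₀ : α₀ < β₀ := by
    rw [hα₀def, hβ₀def]
    rcases max_cases a₀ (γm * c₀) with ⟨he, _⟩ | ⟨he, _⟩ <;>
      rcases min_cases b₀ (γp * c₀) with ⟨he2, _⟩ | ⟨he2, _⟩ <;> rw [he, he2]
    · exact hab
    · exact hc₀3
    · exact hc₀4
    · nlinarith
  have hα₀0 : 0 < α₀ := lt_of_lt_of_le ha₀0 hα₀a₀
  have hβ₀0 : 0 < β₀ := lt_of_lt_of_le (mul_pos hγm0 hc₀0) (le_max_right _ _ |>.trans hα₀β₀.le)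
  -- Step A : φ = b on Ioo α₀ β₀
  have hO : ∀ z ∈ Ioo α₀ β₀, φ z = b := by
    rintro z ⟨hz1, hz2⟩
    have hza : a₀ < z := lt_of_le_of_lt hα₀a₀ hz1
    have hzb : z < b₀ := lt_of_lt_of_le hz2 hβ₀b₀
    have hUnhds : U ∈ 𝓝 z := by
      rw [mem_nhds_iff]
      exact ⟨Ioo a₀ b₀, subset_trans Ioo_subset_Icc_self (hUint.out ha₀ hb₀),
        isOpen_Ioo, hza, hzb⟩
    have hca : ContinuousAt φ z := hcont.continuousAt hUnhds
    have hzc : z ∈ closure ((· * c₀) '' TProd T γm γp) := by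
      apply image_closure_subset_closure_image (continuous_mul_right c₀)
      refine ⟨z / c₀, hd ⟨?_, ?_⟩, by field_simp⟩
      · rw [le_div_iff₀ hc₀0]; calc γm * c₀ ≤ α₀ := hα₀γ
          _ ≤ z := hz1.le
      · rw [div_le_iff₀ hc₀0]; calc z ≤ β₀ := hz2.le
          _ ≤ γp * c₀ := hβ₀γ
    obtain ⟨u, hu1, hu2⟩ := mem_closure_iff_seq_limit.mp hzc
    have huconst : ∀ n, φ (u n) = b := by
      intro n
      obtain ⟨s, hs, heq⟩ := hu1 n
      have := aux_prodTP hT0 hγm0 hγm1.le hγp.le hstep hc₀0 hcIc₀ s hs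
      rw [← heq]
      simpa using this
    have htend : Tendsto (fun n => φ (u n)) atTop (𝓝 (φ z)) := hca.tendsto.comp hu2
    have htend' : Tendsto (fun n => φ (u n)) atTop (𝓝 b) := by
      have : (fun n => φ (u n)) = fun _ => b := funext huconst
      rw [this]; exact tendsto_const_nhds
    exact tendsto_nhds_unique htend htend'
  -- core lemma
  have hcore : ∀ A' B', A' ∈ I → B' ∈ I → A' ≤ A → B ≤ B' →
      ∀ c, A' < γm * c → γp * c < B' → φ c = b := by
    intro A' B' hA'I hB'I hA'A hBB'
    have hA'0 : 0 < A' := hI hA'I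
    have hIcc' : Icc A' B' ⊆ I := hIint.out hA'I hB'I
    have hK : ∀ n : ℕ, ∀ c, A' < γm * c → γp * c < B' →
        α₀ < γp ^ (n + 1) * c → γm ^ (n + 1) * c < β₀ → φ c = b := by
      intro n
      induction n with
      | zero =>
        intro c h1 h2 h3 h4
        have hc0 : 0 < c := by nlinarith
        rw [pow_one] at h3 h4
        exact aux_dense hT0 hγm0 hγm1 hγp hd hstep hα₀β₀ hO hc0
          (subset_trans (Icc_subset_Icc h1.le h2.le) hIcc') h3 h4
      | succ n ih =>
        intro c h1 h2 h3 h4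
        have hc0 : 0 < c := by nlinarith
        have hγpp : (0:ℝ) < γp ^ (n + 1) := pow_pos hγp0 _
        have hγmp : (0:ℝ) < γm ^ (n + 1) := pow_pos hγm0 _
        have hγpge : γp ≤ γp ^ (n + 1) := by
          calc γp = γp ^ 1 := (pow_one γp).symm
            _ ≤ γp ^ (n + 1) := pow_le_pow_right₀ hγp.le (Nat.le_add_left 1 n)
        have hγmle : γm ^ (n + 1) ≤ γm := by
          calc γm ^ (n + 1) ≤ γm ^ 1 := pow_le_pow_of_le_one hγm0.le hγm1.le (Nat.le_add_left 1 n)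
            _ = γm := pow_one γm
        -- the known interval at level n
        set L := max (A' / γm) (α₀ / γp ^ (n + 1)) with hLdef
        set R := min (B' / γp) (β₀ / γm ^ (n + 1)) with hRdef
        have hc₀mem : L < c₀ ∧ c₀ < R := by
          constructor
          · rw [hLdef, max_lt_iff]
            constructor
            · rw [div_lt_iff₀ hγm0]; linarith [mul_comm c₀ γm]
            · rw [div_lt_iff₀ hγpp]
              have : γp * c₀ ≤ γp ^ (n+1) * c₀ := mul_le_mul_of_nonneg_right hγpge hc₀0.le
              have hac : α₀ < γp * c₀ := by
                rcases max_cases a₀ (γm * c₀) with ⟨he, _⟩ | ⟨he, _⟩ <;> rw [hα₀def, he]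
                · exact hc₀3
                · nlinarith
              linarith [mul_comm c₀ (γp ^ (n+1))]
          · rw [hRdef, lt_min_iff]
            constructor
            · rw [lt_div_iff₀ hγp0]; linarith [mul_comm c₀ γp]
            · rw [lt_div_iff₀ hγmp]
              have : γm ^ (n+1) * c₀ ≤ γm * c₀ := mul_le_mul_of_nonneg_right hγmle hc₀0.le
              have hbc : γm * c₀ < β₀ := by
                rcases min_cases b₀ (γp * c₀) with ⟨he, _⟩ | ⟨he, _⟩ <;> rw [hβ₀def, he]
                · exact hc₀4
                · nlinarith
              linarith [mul_comm c₀ (γm ^ (n+1))]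
        have hLR2 : L < R := lt_trans hc₀mem.1 hc₀mem.2
        have hbmid : ∀ z ∈ Ioo L R, φ z = b := by
          rintro z ⟨hzL, hzR⟩
          have hz1 : A' / γm < z := lt_of_le_of_lt (le_max_left _ _) hzL
          have hz2 : α₀ / γp ^ (n + 1) < z := lt_of_le_of_lt (le_max_right _ _) hzL
          have hz3 : z < B' / γp := lt_of_lt_of_le hzR (min_le_left _ _)
          have hz4 : z < β₀ / γm ^ (n + 1) := lt_of_lt_of_le hzR (min_le_right _ _)
          rw [div_lt_iff₀ hγm0] at hz1
          rw [div_lt_iff₀ hγpp] at hz2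
          rw [lt_div_iff₀ hγp0] at hz3
          rw [lt_div_iff₀ hγmp] at hz4
          exact ih z (by linarith [mul_comm z γm]) (by linarith [mul_comm z γp])
            (by linarith [mul_comm z (γp ^ (n+1))]) (by linarith [mul_comm z (γm ^ (n+1))])
        apply aux_dense hT0 hγm0 hγm1 hγp hd hstep hLR2 hbmid hc0
          (subset_trans (Icc_subset_Icc h1.le h2.le) hIcc')
        · rw [hLdef, max_lt_iff]
          constructor
          · rw [div_lt_iff₀ hγm0]
            have : c < γp * c := by nlinarith
            nlinarith
          · rw [div_lt_iff₀ hγpp]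
            have : γp ^ (n + 1) * (γp * c) = γp ^ (n + 1 + 1) * c := by ring
            rw [mul_comm (γp * c) (γp ^ (n+1)), this]
            exact h3
        · rw [hRdef, lt_min_iff]
          constructor
          · rw [lt_div_iff₀ hγp0]
            have : γm * c < c := by nlinarith
            nlinarith
          · rw [lt_div_iff₀ hγmp]
            have : γm ^ (n + 1) * (γm * c) = γm ^ (n + 1 + 1) * c := by ring
            rw [mul_comm (γm * c) (γm ^ (n+1)), this]
            exact h4
    -- now find n for a given c
    intro c h1 h2
    have hc0 : 0 < c := by nlinarith
    obtain ⟨n₁, hn₁⟩ := pow_unbounded_of_one_lt (α₀ / c) hγp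
    obtain ⟨n₂, hn₂⟩ := exists_pow_lt_of_lt_one (div_pos hβ₀0 hc0) hγm1
    apply hK (n₁ + n₂) c h1 h2
    · have hmono : γp ^ n₁ ≤ γp ^ (n₁ + n₂ + 1) :=
        pow_le_pow_right₀ hγp.le (by omega)
      rw [div_lt_iff₀ hc0] at hn₁
      calc α₀ < γp ^ n₁ * c := by linarith [mul_comm c (γp ^ n₁)]
        _ ≤ γp ^ (n₁ + n₂ + 1) * c := mul_le_mul_of_nonneg_right hmono hc0.le
    · have hmono : γm ^ (n₁ + n₂ + 1) ≤ γm ^ n₂ :=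
        pow_le_pow_of_le_one hγm0.le hγm1.le (by omega)
      rw [lt_div_iff₀ hc0] at hn₂
      calc γm ^ (n₁ + n₂ + 1) * c ≤ γm ^ n₂ * c := mul_le_mul_of_nonneg_right hmono hc0.le
        _ < β₀ := by linarith [mul_comm c (γm ^ n₂)]
  -- mid lemma
  have hmid : ∀ A' B', A' ∈ I → B' ∈ I → A' ≤ A → B ≤ B' →
      ∀ y, A' < y → y < B' → φ y = b := by
    intro A' B' hA'I hB'I hA'A hBB' y hy1 hy2
    have hA'0 : 0 < A' := hI hA'I
    have hy0 : 0 < y := lt_trans hA'0 hy1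
    have hB'0 : 0 < B' := lt_trans hy0 hy2
    have hIcc' : Icc A' B' ⊆ I := hIint.out hA'I hB'I
    have hA'B' : γp * A' < γm * B' := by
      have h1 := mul_le_mul_of_nonneg_left hA'A hγp0.le
      have h2 := mul_le_mul_of_nonneg_left hBB' hγm0.le
      linarith
    obtain ⟨s, hsT, hsl, hsr⟩ := aux_pick hd (l := γp * y / B') (r := γm * y / A') (by
      rcases max_cases γm (γp * y / B') with ⟨he, _⟩ | ⟨he, _⟩ <;>
        rcases min_cases γp (γm * y / A') with ⟨he2, _⟩ | ⟨he2, _⟩ <;> rw [he, he2]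
      · exact lt_trans hγm1 hγp
      · rw [lt_div_iff₀ hA'0]; exact mul_lt_mul_of_pos_left hy1 hγm0
      · rw [div_lt_iff₀ hB'0]; exact mul_lt_mul_of_pos_left hy2 hγp0
      · rw [div_lt_div_iff₀ hB'0 hA'0]
        linarith [mul_lt_mul_of_pos_left hA'B' hy0])
    have hs0 : 0 < s := lt_trans (div_pos (mul_pos hγp0 hy0) hB'0) hsl
    set c := y / s with hcdef
    have hc0 : 0 < c := div_pos hy0 hs0
    have hsc : s * c = y := by rw [hcdef]; field_simp
    have hg1 : A' < γm * c := by
      rw [hcdef, mul_div_assoc', lt_div_iff₀ hs0]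
      rw [lt_div_iff₀ hA'0] at hsr
      linarith
    have hg2 : γp * c < B' := by
      rw [hcdef, mul_div_assoc', div_lt_iff₀ hs0]
      rw [div_lt_iff₀ hB'0] at hsl
      linarith
    have : φ (s * c) = φ c := aux_prodTP hT0 hγm0 hγm1.le hγp.le hstep hc0
      (subset_trans (Icc_subset_Icc hg1.le hg2.le) hIcc') s hsT
    rw [← hsc, this]
    exact hcore A' B' hA'I hB'I hA'A hBB' c hg1 hg2
  -- τ
  obtain ⟨τ, hτT, hτlb, hτ1⟩ := exists_tau hT0 hγm0 hγm1 hγp hd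
  have hτ0 : 0 < τ := tstar_pos hT0 hτT
  -- main conclusion
  refine ⟨b, ?_⟩
  intro x hx
  have hx0 : 0 < x := hI hx
  set Ax := min A x with hAxdef
  set Bx := max B x with hBxdef
  have hAxI : Ax ∈ I := by rcases min_cases A x with ⟨h, _⟩ | ⟨h, _⟩ <;> rw [hAxdef, h] <;> assumption
  have hBxI : Bx ∈ I := by rcases max_cases B x with ⟨h, _⟩ | ⟨h, _⟩ <;> rw [hBxdef, h] <;> assumption
  have hAx0 : 0 < Ax := hI hAxI
  have hAxA : Ax ≤ A := min_le_left _ _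
  have hBBx : B ≤ Bx := le_max_left _ _
  have hAxx : Ax ≤ x := min_le_right _ _
  have hxBx : x ≤ Bx := le_max_right _ _
  have hBx0 : 0 < Bx := hI hBxI
  have hAxBx : γp * Ax < γm * Bx := by
    have h1 := mul_le_mul_of_nonneg_left hAxA hγp0.le
    have h2 := mul_le_mul_of_nonneg_left hBBx hγm0.le
    linarith
  have hIccx : Icc Ax Bx ⊆ I := hIint.out hAxI hBxI
  have htgb : γm ≤ τ * γp := by
    have := hτlb
    rwa [div_le_iff₀ hγp0] at this
  have hkey : Ax < Bx * τ := by
    have h3 : γm * Bx ≤ τ * γp * Bx := by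
      have := mul_le_mul_of_nonneg_right htgb hBx0.le
      linarith
    have h4 : γp * Ax < γp * (Bx * τ) := by linarith
    exact lt_of_mul_lt_mul_left h4 hγp0.le
  by_cases h1 : x < Bx
  · by_cases h2 : Ax < x
    · exact hmid Ax Bx hAxI hBxI hAxA hBBx x h2 h1
    · have hxeq : x = Ax := le_antisymm (not_lt.mp h2) hAxx
      have hy1 : x < x / τ := by
        rw [lt_div_iff₀ hτ0]
        have := mul_lt_mul_of_pos_left hτ1 hx0
        linarith
      have hy2 : x / τ < Bx := by
        rw [div_lt_iff₀ hτ0, hxeq]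
        exact hkey
      have hyI : x / τ ∈ I := hIccx ⟨le_trans hAxx hy1.le, hy2.le⟩
      have hτy : τ * (x / τ) = x := by
        rw [mul_div_assoc']
        exact mul_div_cancel_left₀ x (ne_of_gt hτ0)
      have hh : φ (τ * (x / τ)) = φ (x / τ) := hstep τ hτT (x / τ) hyI (by rw [hτy]; exact hx)
      rw [← hτy, hh]
      exact hmid Ax Bx hAxI hBxI hAxA hBBx (x / τ) (lt_of_le_of_lt hAxx hy1) hy2
  · have hxeq : x = Bx := le_antisymm hxBx (not_lt.mp h1)
    have hy1 : τ * x < x := by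
      have := mul_lt_mul_of_pos_right hτ1 hx0
      linarith
    have hy2 : Ax < τ * x := by
      rw [hxeq]
      linarith [hkey]
    have hyI : τ * x ∈ I := hIccx ⟨hy2.le, le_trans hy1.le hxBx⟩
    have hh : φ (τ * x) = φ x := hstep τ hτT x hx hyI
    rw [← hh]
    exact hmid Ax Bx hAxI hBxI hAxA hBBx (τ * x) hy2 (lt_of_lt_of_le hy1 hxBx)
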